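/- Let 𝒳 be a nonempty finite set, T a positive integer, η ∈ (0,1/2], and γ > 0. Let h⁽¹⁾,…,h⁽ᵀ⁾ : 𝒳 → [0,1], let p⁽⁰⁾ be the uniform distribution on 𝒳, and for each t define p⁽ᵗ⁾(x) = p⁽ᵗ⁻¹⁾(x)(1 − η h⁽ᵗ⁾(x)) / Σ_{y∈𝒳} p⁽ᵗ⁻¹⁾(y)(1 − η h⁽ᵗ⁾(y)), where Σ_{x∈𝒳} h⁽ᵗ⁾(x) p⁽ᵗ⁻¹⁾(x) ≥ γ for every t. Then for every ν > 0, the set S = {x ∈ 𝒳 : Σ_{t=1}^T h⁽ᵗ⁾(x) < νT} satisfies |S| ≤ |𝒳| · exp(−γηT + νηT + νη²T). -/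

import Mathlib

open Finset
open scoped Classical

lemma key_ineq (u : ℝ) (h0 : 0 ≤ u) (h1 : u ≤ 1/2) :
    Real.exp (-(u + u^2)) ≤ 1 - u := by
  have hu1 : |u| < 1 := by rw [abs_of_nonneg h0]; linarith
  have hb := Real.abs_log_sub_add_sum_range_le hu1 4
  rw [abs_of_nonneg h0] at hb
  have hsum : (∑ i ∈ Finset.range 4, u ^ (i + 1) / (i + 1))
      = u + u^2/2 + u^3/3 + u^4/4 := by
    simp [Finset.sum_range_succ]; ring
  rw [hsum] at hb
  have habs := abs_le.1 hb
  have hlog : -(u + u^2) ≤ Real.log (1 - u) := by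
    have h2 : 1 - u ≥ 1/2 := by linarith
    have htail : u^5 / (1 - u) ≤ 2 * u^5 := by
      rw [div_le_iff₀ (by linarith)]; nlinarith [pow_nonneg h0 5]
    nlinarith [habs.1, pow_nonneg h0 2, pow_nonneg h0 3, pow_nonneg h0 4, pow_nonneg h0 5,
      mul_le_of_le_one_left (pow_nonneg h0 2) (by linarith : u ≤ 1),
      sq_nonneg u, sq_nonneg (u - 1/2)]
  calc Real.exp (-(u + u^2)) ≤ Real.exp (Real.log (1 - u)) := Real.exp_le_exp.2 hlog
    _ = 1 - u := Real.exp_log (by linarith)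

theorem stmt3 {X : Type*} [Fintype X] [Nonempty X]
    (T : ℕ) (hT : 0 < T)
    (η γ : ℝ) (hη : η ∈ Set.Ioc (0 : ℝ) (1 / 2)) (hγ : 0 < γ)
    (h : ℕ → X → ℝ) (hh : ∀ t x, h t x ∈ Set.Icc (0 : ℝ) 1)
    (p : ℕ → X → ℝ)
    (hp0 : ∀ x, p 0 x = 1 / (Fintype.card X : ℝ))
    (hrec : ∀ t < T, ∀ x, p (t + 1) x =
      p t x * (1 - η * h (t + 1) x) / ∑ y, p t y * (1 - η * h (t + 1) y))
    (hcov : ∀ t < T, γ ≤ ∑ x, h (t + 1) x * p t x)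
    (ν : ℝ) (hν : 0 < ν) :
    ((Finset.univ.filter
        (fun x : X => ∑ t ∈ Finset.Icc 1 T, h t x < ν * T)).card : ℝ)
      ≤ (Fintype.card X : ℝ) *
          Real.exp (-γ * η * T + ν * η * T + ν * η ^ 2 * T) := by
  obtain ⟨hη0, hη2⟩ := hη
  set N : ℝ := (Fintype.card X : ℝ) with hNdef
  have hN : 0 < N := by
    rw [hNdef]; exact_mod_cast Fintype.card_pos (α := X)
  set w : ℕ → X → ℝ := fun t x => (1/N) * ∏ s ∈ Finset.Icc 1 t, (1 - η * h s x) with hw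
  have hfac : ∀ s x, 0 < 1 - η * h s x := by
    intro s x
    have h1 := (hh s x).1; have h2 := (hh s x).2
    nlinarith
  have hwpos : ∀ t x, 0 < w t x := by
    intro t x
    exact mul_pos (by positivity) (Finset.prod_pos fun s _ => hfac s x)
  set Z : ℕ → ℝ := fun t => ∑ x, w t x with hZ
  have hZpos : ∀ t, 0 < Z t := fun t => Finset.sum_pos (fun x _ => hwpos t x) univ_nonempty
  have hZ0 : Z 0 = 1 := by
    simp only [hZ, hw, Finset.Icc_eq_empty (by omega : ¬ (1:ℕ) ≤ 0), Finset.prod_empty, mul_one,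
      Finset.sum_const, nsmul_eq_mul]
    field_simp
    rw [Finset.card_univ, hNdef]
  have hwrec : ∀ t x, w (t+1) x = w t x * (1 - η * h (t+1) x) := by
    intro t x
    simp only [hw]
    rw [Finset.prod_Icc_succ_top (by omega : 1 ≤ t+1)]
    ring
  have hZrec : ∀ t, Z (t+1) = Z t - η * ∑ x, h (t+1) x * w t x := by
    intro t
    simp only [hZ]
    rw [Finset.mul_sum, ← Finset.sum_sub_distrib]
    refine Finset.sum_congr rfl fun x _ => ?_
    rw [hwrec t x]; ring
  -- p t x = w t x / Z t
  have hpw : ∀ t, t ≤ T → ∀ x, p t x = w t x / Z t := by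
    intro t
    induction t with
    | zero =>
      intro _ x
      rw [hp0, hZ0, hw]
      simp [Finset.Icc_eq_empty (by omega : ¬ (1:ℕ) ≤ 0)]
    | succ t ih =>
      intro htT x
      have ht : t < T := by omega
      have ihx := ih (le_of_lt ht)
      have hden : (∑ y, p t y * (1 - η * h (t+1) y)) = Z (t+1) / Z t := by
        rw [hZ, Finset.sum_div]
        refine Finset.sum_congr rfl fun y _ => ?_
        rw [ihx y, hwrec t y]; ring
      have hZt := (hZpos t).ne'
      have hZt1 := (hZpos (t+1)).ne'
      rw [hrec t ht x, hden, ihx x, hwrec t x]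
      field_simp
  -- Z decay
  have hZdecay : ∀ t, t ≤ T → Z t ≤ Real.exp (-(η * γ) * t) := by
    intro t
    induction t with
    | zero => intro _; simp [hZ0]
    | succ t ih =>
      intro htT
      have ht : t < T := by omega
      have ihZ := ih (le_of_lt ht)
      have hcovw : γ * Z t ≤ ∑ x, h (t+1) x * w t x := by
        have := hcov t ht
        have heq : (∑ x, h (t+1) x * p t x) = (∑ x, h (t+1) x * w t x) / Z t := by
          rw [Finset.sum_div]
          exact Finset.sum_congr rfl fun x _ => by rw [hpw t (le_of_lt ht) x]; ring
        rw [heq, le_div_iff₀ (hZpos t)] at this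
        linarith
      have h1 : Z (t+1) ≤ Z t * (1 - η * γ) := by
        rw [hZrec t]
        nlinarith
      have h2 : Z t * (1 - η * γ) ≤ Z t * Real.exp (-(η * γ)) := by
        apply mul_le_mul_of_nonneg_left _ (le_of_lt (hZpos t))
        have := Real.add_one_le_exp (-(η * γ))
        linarith
      calc Z (t+1) ≤ Z t * Real.exp (-(η * γ)) := le_trans h1 h2
        _ ≤ Real.exp (-(η * γ) * t) * Real.exp (-(η * γ)) := by
            apply mul_le_mul_of_nonneg_right ihZ (Real.exp_nonneg _)
        _ = Real.exp (-(η * γ) * ((t:ℝ)+1)) := by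
            rw [← Real.exp_add]; ring_nf
        _ = Real.exp (-(η * γ) * ((t+1 : ℕ):ℝ)) := by push_cast; ring_nf
  -- lower bound on w T x for x in S
  set S := Finset.univ.filter (fun x : X => ∑ t ∈ Finset.Icc 1 T, h t x < ν * T) with hS
  have hlow : ∀ x ∈ S, (1/N) * Real.exp (-((η + η^2) * (ν * T))) ≤ w T x := by
    intro x hx
    rw [hS, Finset.mem_filter] at hx
    have hxs := hx.2
    have hprod : Real.exp (-((η + η^2) * ∑ t ∈ Finset.Icc 1 T, h t x))
        ≤ ∏ s ∈ Finset.Icc 1 T, (1 - η * h s x) := by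
      rw [Finset.mul_sum, ← Finset.sum_neg_distrib, Real.exp_sum]
      apply Finset.prod_le_prod (fun s _ => Real.exp_nonneg _)
      intro s _
      have h1 := (hh s x).1; have h2 := (hh s x).2
      have hk := key_ineq (η * h s x) (by positivity) (by nlinarith)
      calc Real.exp (-((η + η^2) * h s x))
          ≤ Real.exp (-(η * h s x + (η * h s x)^2)) := by
            apply Real.exp_le_exp.2
            nlinarith [mul_nonneg (mul_nonneg (sq_nonneg η) h1) (sub_nonneg.2 h2)]
        _ ≤ 1 - η * h s x := hk
    have hmono : Real.exp (-((η + η^2) * (ν * T)))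
        ≤ Real.exp (-((η + η^2) * ∑ t ∈ Finset.Icc 1 T, h t x)) := by
      apply Real.exp_le_exp.2
      have : 0 < η + η^2 := by positivity
      nlinarith
    rw [hw]
    have := le_trans hmono hprod
    have h1N : 0 < 1/N := by positivity
    nlinarith
  -- combine
  have hsumS : (S.card : ℝ) * ((1/N) * Real.exp (-((η + η^2) * (ν * T)))) ≤ Z T := by
    calc (S.card : ℝ) * ((1/N) * Real.exp (-((η + η^2) * (ν * T))))
        ≤ ∑ x ∈ S, w T x := by
          have := Finset.sum_le_sum hlow
          simpa [Finset.sum_const, nsmul_eq_mul, mul_comm] using this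
      _ ≤ ∑ x, w T x := Finset.sum_le_sum_of_subset_of_nonneg (Finset.filter_subset _ _)
          (fun x _ _ => le_of_lt (hwpos T x))
      _ = Z T := rfl
  have hfinal : (S.card : ℝ) * ((1/N) * Real.exp (-((η + η^2) * (ν * T))))
      ≤ Real.exp (-(η * γ) * T) := le_trans hsumS (hZdecay T le_rfl)
  have hexp : 0 < Real.exp (-((η + η^2) * (ν * T))) := Real.exp_pos _
  have hgoal : (S.card : ℝ) ≤ N * (Real.exp (-(η * γ) * T) / Real.exp (-((η + η^2) * (ν * T)))) := by
    have h3 := mul_le_mul_of_nonneg_right hfinal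
      (by positivity : (0:ℝ) ≤ N / Real.exp (-((η + η^2) * (ν * (T:ℝ)))))
    have hEne : Real.exp (-((η + η^2) * (ν * (T:ℝ)))) ≠ 0 := hexp.ne'
    have hNne : N ≠ 0 := hN.ne'
    calc (S.card : ℝ)
        = (S.card : ℝ) * (1/N * Real.exp (-((η + η^2) * (ν * (T:ℝ)))))
            * (N / Real.exp (-((η + η^2) * (ν * (T:ℝ))))) := by field_simp
      _ ≤ Real.exp (-(η * γ) * (T:ℝ)) * (N / Real.exp (-((η + η^2) * (ν * (T:ℝ))))) := h3
      _ = N * (Real.exp (-(η * γ) * (T:ℝ)) / Real.exp (-((η + η^2) * (ν * (T:ℝ))))) := by ring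
  rw [← Real.exp_sub] at hgoal
  have hexpeq : -(η * γ) * (T:ℝ) - -((η + η^2) * (ν * (T:ℝ)))
      = -γ * η * T + ν * η * T + ν * η ^ 2 * T := by ring
  rw [← hexpeq]
  exact hgoal
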